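/- arXiv:1512.05139 — 3 statements merged into one kernel-verified Lean document; each statement's English description precedes it below -/
import Mathlib

section
/- Let T be an ergodic measure-preserving free G-action on (X,μ), H a countable discrete group, and α: R → H an ergodic cocycle of the T-orbit equivalence relation R (meaning the skew product action T(α)_g(x,h)=(T_g x, α(T_g x,x)h) on X×H is ergodic). Then the subrelation R_0 := {(x,y) ∈ R : α(x,y) = 1} is ergodic. -/
open MeasureTheory

/-- If `α : R → H` is an ergodic cocycle of the orbit equivalence relation
of an ergodic measure-preserving free action `T` (i.e. the skew product
`T(α)_g(x,h) = (T_g x, α(T_g x, x) h)` on `X × H` is ergodic), then the subrelation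
`R₀ = {(x,y) ∈ R : α(x,y) = 1}` is ergodic. -/
theorem ergodic_subrelation_of_ergodic_cocycle
    {G H X : Type*} [Countable G] [Group G] [Countable H] [Group H]
    [MeasurableSpace X] [MeasurableSpace H] [MeasurableSingletonClass H]
    (μ : Measure X) [IsProbabilityMeasure μ]
    (T : G → X → X)
    (hTmeas : ∀ g, Measurable (T g))
    (hTbij : ∀ g, Function.Bijective (T g))
    (hTid : ∀ x, T 1 x = x)
    (hTmul : ∀ g g' x, T (g * g') x = T g (T g' x))
    (hTpres : ∀ g, MeasurePreserving (T g) μ μ)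
    (hTfree : ∀ᵐ x ∂μ, ∀ g : G, g ≠ 1 → T g x ≠ x)
    (hTerg : ∀ A : Set X, MeasurableSet A → (∀ g, T g ⁻¹' A = A) → μ A = 0 ∨ μ A = 1)
    (α : X → X → H)
    (hαmeas : ∀ g, Measurable (fun x => α (T g x) x))
    (hαcoc : ∀ x (g g' : G), α (T g x) x = α (T g x) (T g' x) * α (T g' x) x)
    -- the skew product extension T(α) on (X × H, μ × counting) and its ergodicity
    (Tα : G → X × H → X × H)
    (hTα : ∀ g p, Tα g p = (T g p.1, α (T g p.1) p.1 * p.2))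
    (hαerg : ∀ A : Set (X × H), MeasurableSet A → (∀ g, Tα g ⁻¹' A = A) →
      (μ.prod Measure.count) A = 0 ∨ (μ.prod Measure.count) Aᶜ = 0) :
    -- conclusion: R₀ = {(x,y) ∈ R : α(x,y) = 1} is ergodic
    ∀ A : Set X, MeasurableSet A →
      (∀ x ∈ A, ∀ g : G, α (T g x) x = 1 → T g x ∈ A) →
      μ A = 0 ∨ μ A = 1 := by
  haveI : SFinite (Measure.count : Measure H) := by unfold Measure.count; infer_instance
  intro A hA hAsat
  -- α is reflexively trivial
  have hrefl : ∀ x, α x x = 1 := by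
    intro x
    have h := hαcoc x 1 1
    simp only [hTid] at h
    exact left_eq_mul.mp h
  have hinv : ∀ (x : X) (g : G), α (T g x) x = 1 → α x (T g x) = 1 := by
    intro x g hg
    have h := hαcoc x 1 g
    simp only [hTid, hrefl, hg, mul_one] at h
    exact h.symm
  -- the candidate invariant set
  set S : Set (X × H) := A ×ˢ ({1} : Set H) with hS
  set B : Set (X × H) := ⋃ g : G, Tα g ⁻¹' S with hB
  have hcomp : ∀ (g g' : G) (p : X × H), Tα g (Tα g' p) = Tα (g * g') p := by
    intro g g' p
    rw [hTα, hTα, hTα]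
    have h1 : T (g * g') p.1 = T g (T g' p.1) := hTmul g g' p.1
    have h2 := hαcoc p.1 (g * g') g'
    rw [h1] at h2 ⊢
    rw [h2, mul_assoc]
  -- measurability of B
  have hSmeas : ∀ g : G, MeasurableSet (Tα g ⁻¹' S) := by
    intro g
    have heq : Tα g ⁻¹' S =
        {p : X × H | T g p.1 ∈ A} ∩
          ⋃ h : H, ((fun x => α (T g x) x) ⁻¹' {h⁻¹}) ×ˢ ({h} : Set H) := by
      ext ⟨x, h⟩
      simp only [Set.mem_preimage, hTα, hS, Set.mem_prod, Set.mem_singleton_iff,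
        Set.mem_inter_iff, Set.mem_setOf_eq, Set.mem_iUnion]
      constructor
      · rintro ⟨h1, h2⟩
        exact ⟨h1, h, mul_eq_one_iff_eq_inv.mp h2, rfl⟩
      · rintro ⟨h1, h', h2, h3⟩
        subst h3
        exact ⟨h1, mul_eq_one_iff_eq_inv.mpr h2⟩
    rw [heq]
    exact (((hTmeas g).comp measurable_fst) hA).inter
      (MeasurableSet.iUnion fun h =>
        ((hαmeas g (measurableSet_singleton _)).prod (measurableSet_singleton h)))
  have hBmeas : MeasurableSet B := MeasurableSet.iUnion hSmeas
  -- invariance of B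
  have hBinv : ∀ g : G, Tα g ⁻¹' B = B := by
    intro g'
    ext p
    simp only [hB, Set.mem_iUnion, Set.mem_preimage]
    constructor
    · rintro ⟨g, hg⟩
      refine ⟨g * g', ?_⟩
      rwa [← hcomp]
    · rintro ⟨g, hg⟩
      refine ⟨g * g'⁻¹, ?_⟩
      rw [hcomp]
      simpa using hg
  rcases hαerg B hBmeas hBinv with h0 | h1
  · -- B null, and A × {1} ⊆ B, hence μ A = 0
    left
    have hsub : S ⊆ B := by
      rintro ⟨x, h⟩ ⟨hx, hh⟩
      simp only [hB, Set.mem_iUnion, Set.mem_preimage]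
      refine ⟨1, ?_⟩
      rw [hTα]
      simp only [hTid, hrefl, one_mul]
      exact ⟨hx, hh⟩
    have : (μ.prod Measure.count) S = 0 :=
      le_antisymm (h0 ▸ measure_mono hsub) (zero_le)
    rwa [hS, Measure.prod_prod, Measure.count_singleton, mul_one] at this
  · -- Bᶜ null, and Aᶜ × {1} ⊆ Bᶜ, hence μ Aᶜ = 0
    right
    have hsub : (Aᶜ ×ˢ ({1} : Set H)) ⊆ Bᶜ := by
      rintro ⟨x, h⟩ ⟨hx, hh⟩ hmem
      simp only [Set.mem_singleton_iff] at hh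
      subst hh
      simp only [hB, Set.mem_iUnion, Set.mem_preimage] at hmem
      obtain ⟨g, hg⟩ := hmem
      rw [hTα] at hg
      simp only [hS, Set.mem_prod, Set.mem_singleton_iff, mul_one] at hg
      obtain ⟨hgA, hg1⟩ := hg
      have hx' : T g⁻¹ (T g x) ∈ A := by
        apply hAsat (T g x) hgA g⁻¹
        have hxx : T g⁻¹ (T g x) = x := by
          rw [← hTmul, inv_mul_cancel, hTid]
        rw [hxx]
        exact hinv x g hg1
      rw [← hTmul, inv_mul_cancel, hTid] at hx'
      exact hx hx'
    have hc : (μ.prod Measure.count) (Aᶜ ×ˢ ({1} : Set H)) = 0 :=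
      le_antisymm (h1 ▸ measure_mono hsub) (zero_le)
    rw [Measure.prod_prod, Measure.count_singleton, mul_one] at hc
    have hμ := measure_compl hA (measure_ne_top μ A)
    rw [hc, measure_univ] at hμ
    exact le_antisymm prob_le_one (tsub_eq_zero_iff_le.mp hμ.symm)
end

section
/- Let T be an ergodic measure-preserving free G-action on (X,μ), α: R → H an ergodic cocycle into a countable discrete group H, and S an ergodic nonsingular H-action on (Y,ν). Then the skew product action T(α,S)_g(x,y) = (T_g x, S_{α(T_g x,x)} y) on (X×Y, μ×ν) is ergodic. -/
open MeasureTheory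

lemma count_sfinite {H : Type*} [Countable H] [MeasurableSpace H] :
    SFinite (Measure.count : Measure H) := by
  rw [Measure.count]; infer_instance

/-- For a measurable set in a product with a countable discrete type carrying counting
measure, the product measure is the sum of the measures of the sections. -/
lemma prod_count_eq_tsum {X H : Type*} [MeasurableSpace X] [MeasurableSpace H]
    [Countable H] [MeasurableSingletonClass H] (μ : Measure X) [SFinite μ]
    (B : Set (X × H)) (hB : MeasurableSet B) :
    (μ.prod Measure.count) B = ∑' h : H, μ {x | (x, h) ∈ B} := by
  haveI : SFinite (Measure.count : Measure H) := count_sfinite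
  rw [Measure.prod_apply hB]
  have hcount : ∀ x : X, Measure.count (Prod.mk x ⁻¹' B) =
      ∑' h : H, Set.indicator {x' | (x', h) ∈ B} (fun _ => (1 : ENNReal)) x := by
    intro x
    rw [Measure.count_apply ((Set.to_countable _).measurableSet), ← ENNReal.tsum_set_one,
      tsum_subtype (Prod.mk x ⁻¹' B) (fun _ => (1 : ENNReal))]
    exact tsum_congr fun h => by
      by_cases hx : (x, h) ∈ B <;> simp [Set.indicator_apply, hx]
  calc ∫⁻ x, Measure.count (Prod.mk x ⁻¹' B) ∂μ
      = ∫⁻ x, ∑' h : H, Set.indicator {x' | (x', h) ∈ B} (fun _ => (1 : ENNReal)) x ∂μ :=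
        lintegral_congr hcount
    _ = ∑' h : H, ∫⁻ x, Set.indicator {x' | (x', h) ∈ B} (fun _ => (1 : ENNReal)) x ∂μ := by
        refine lintegral_tsum fun h => ?_
        exact ((measurable_const (a := (1:ENNReal))).indicator
          (measurable_prodMk_right hB)).aemeasurable
    _ = ∑' h : H, μ {x | (x, h) ∈ B} := by
        refine tsum_congr fun h => ?_
        have hs : MeasurableSet {x' : X | (x', h) ∈ B} := measurable_prodMk_right hB
        rw [lintegral_indicator hs, setLIntegral_one]

/-- If `T` is an ergodic measure-preserving free `G`-action, `α` an ergodic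
cocycle with values in a countable group `H`, and `S` an ergodic nonsingular `H`-action,
then the skew product `T(α,S)_g(x,y) = (T_g x, S_{α(T_g x,x)} y)` is ergodic. -/
theorem skew_product_ergodic
    {G H X Y : Type*} [Countable G] [Group G] [Countable H] [Group H]
    [MeasurableSpace X] [MeasurableSpace Y] [MeasurableSpace H]
    [MeasurableSingletonClass H]
    (μ : Measure X) [IsProbabilityMeasure μ] [NullSingletonClass μ]
    (ν : Measure Y) [IsProbabilityMeasure ν]
    (T : G → X → X)
    (hTmeas : ∀ g, Measurable (T g))
    (hTbij : ∀ g, Function.Bijective (T g))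
    (hTid : ∀ x, T 1 x = x)
    (hTmul : ∀ g g' x, T (g * g') x = T g (T g' x))
    (hTpres : ∀ g, MeasurePreserving (T g) μ μ)
    (hTfree : ∀ᵐ x ∂μ, ∀ g : G, g ≠ 1 → T g x ≠ x)
    (hTerg : ∀ A : Set X, MeasurableSet A → (∀ g, T g ⁻¹' A = A) → μ A = 0 ∨ μ A = 1)
    (α : X → X → H)
    (hαmeas : ∀ g, Measurable (fun x => α (T g x) x))
    (hαcoc : ∀ x (g g' : G), α (T g x) x = α (T g x) (T g' x) * α (T g' x) x)
    -- the skew product extension T(α) on (X × H, μ × counting) is ergodic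
    (Tα : G → X × H → X × H)
    (hTα : ∀ g p, Tα g p = (T g p.1, α (T g p.1) p.1 * p.2))
    (hαerg : ∀ A : Set (X × H), MeasurableSet A → (∀ g, Tα g ⁻¹' A = A) →
      (μ.prod Measure.count) A = 0 ∨ (μ.prod Measure.count) Aᶜ = 0)
    -- S is an ergodic nonsingular H-action on (Y,ν)
    (S : H → Y → Y)
    (hSmeas : ∀ h, Measurable (S h))
    (hSbij : ∀ h, Function.Bijective (S h))
    (hSid : ∀ y, S 1 y = y)
    (hSmul : ∀ h h' y, S (h * h') y = S h (S h' y))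
    (hSns : ∀ h, ν.map (S h) ≪ ν ∧ ν ≪ ν.map (S h))
    (hSerg : ∀ B : Set Y, MeasurableSet B → (∀ h, S h ⁻¹' B = B) → ν B = 0 ∨ ν B = 1)
    -- the skew product action T(α,S)
    (P : G → X × Y → X × Y)
    (hP : ∀ g p, P g p = (T g p.1, S (α (T g p.1) p.1) p.2)) :
    ∀ A : Set (X × Y), MeasurableSet A → (∀ g, P g ⁻¹' A = A) →
      (μ.prod ν) A = 0 ∨ (μ.prod ν) A = 1 := by
  intro A hA hAinv
  -- For each `y`, the slice `At y = {(x,h) | (x, S h y) ∈ A}` is `Tα`-invariant.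
  set At : Y → Set (X × H) := fun y => {p : X × H | (p.1, S p.2 y) ∈ A} with hAt
  -- the map (x,h) ↦ (x, S h y) is measurable
  have hψ : ∀ y : Y, Measurable (fun p : X × H => (p.1, S p.2 y)) := fun y =>
    measurable_fst.prodMk ((Measurable.of_discrete (f := fun h => S h y)).comp measurable_snd)
  have hAtmeas : ∀ y, MeasurableSet (At y) := fun y => (hψ y) hA
  have hAtinv : ∀ y g, Tα g ⁻¹' (At y) = At y := by
    intro y g
    ext ⟨x, h⟩
    simp only [At, Set.mem_preimage, Set.mem_setOf_eq, hTα]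
    rw [hSmul]
    constructor
    · intro hmem
      have h2 : (x, S h y) ∈ P g ⁻¹' A := by rw [Set.mem_preimage, hP]; exact hmem
      rwa [hAinv g] at h2
    · intro hmem
      have h2 : (x, S h y) ∈ P g ⁻¹' A := by rw [hAinv g]; exact hmem
      rw [Set.mem_preimage, hP] at h2
      exact h2
  -- ergodicity of `Tα` applied to the slices
  have hslice : ∀ y, (∀ h, μ {x | (x, S h y) ∈ A} = 0) ∨ (∀ h, μ {x | (x, S h y) ∉ A} = 0) := by
    intro y
    rcases hαerg (At y) (hAtmeas y) (hAtinv y) with h0 | h1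
    · left
      rw [prod_count_eq_tsum μ (At y) (hAtmeas y), ENNReal.tsum_eq_zero] at h0
      exact h0
    · right
      rw [prod_count_eq_tsum μ (At y)ᶜ (hAtmeas y).compl, ENNReal.tsum_eq_zero] at h1
      intro h
      exact h1 h
  -- the set of `y` for which the slice is null
  set Y₀ : Set Y := {y | ∀ h, μ {x | (x, S h y) ∈ A} = 0} with hY₀
  have hY₀meas : MeasurableSet Y₀ := by
    have heq : Y₀ = ⋂ h : H, (fun y => μ ((fun x => (x, y)) ⁻¹' A)) ∘ (S h) ⁻¹' {0} := by
      ext y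
      simp only [hY₀, Set.mem_setOf_eq, Set.mem_iInter, Set.mem_preimage, Function.comp_apply,
        Set.mem_singleton_iff]
      rfl
    rw [heq]
    exact MeasurableSet.iInter fun h =>
      ((measurable_measure_prodMk_right hA).comp (hSmeas h)) (measurableSet_singleton 0)
  -- `Y₀` is `S`-invariant
  have hY₀inv : ∀ h, S h ⁻¹' Y₀ = Y₀ := by
    intro h
    ext y
    simp only [Set.mem_preimage, hY₀, Set.mem_setOf_eq]
    constructor
    · intro hy k
      have := hy (k * h⁻¹)
      rwa [← hSmul, inv_mul_cancel_right] at this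
    · intro hy k
      rw [← hSmul]
      exact hy (k * h)
  rcases hSerg Y₀ hY₀meas hY₀inv with h0 | h1
  · -- `Y₀` null: for a.e. `y` the `A`-section is full, so `A` is full
    right
    have hae : ∀ᵐ y ∂ν, μ ((fun x => (x, y)) ⁻¹' A) = 1 := by
      have hnm : ∀ᵐ y ∂ν, y ∉ Y₀ := measure_eq_zero_iff_ae_notMem.mp h0
      filter_upwards [hnm] with y hy
      rcases hslice y with hs | hs
      · exact absurd hs hy
      · have h1' := hs 1
        rw [hSid] at h1'
        have hc : μ ((fun x => (x, y)) ⁻¹' A)ᶜ = 0 := h1'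
        exact (prob_compl_eq_zero_iff (measurable_prodMk_right hA)).mp hc
    rw [Measure.prod_apply_symm hA]
    calc ∫⁻ y, μ ((fun x => (x, y)) ⁻¹' A) ∂ν = ∫⁻ _, 1 ∂ν := lintegral_congr_ae hae
      _ = 1 := by simp
  · -- `Y₀` full: for a.e. `y` the `A`-section is null, so `A` is null
    left
    have hae : ∀ᵐ y ∂ν, μ ((fun x => (x, y)) ⁻¹' A) = 0 := by
      have hmem : ∀ᵐ y ∂ν, y ∈ Y₀ := by
        have hc : ν Y₀ᶜ = 0 := (prob_compl_eq_zero_iff hY₀meas).mpr h1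
        filter_upwards [measure_eq_zero_iff_ae_notMem.mp hc] with y hy
        simpa using hy
      filter_upwards [hmem] with y hy
      have := hy 1
      rwa [hSid] at this
    rw [Measure.prod_apply_symm hA]
    calc ∫⁻ y, μ ((fun x => (x, y)) ⁻¹' A) ∂ν = ∫⁻ _, (0:ENNReal) ∂ν := lintegral_congr_ae hae
      _ = 0 := by simp
end

section
/- Let ν_n and ν'_n be probabilities on ℤ/2ℤ that agree for all n ≠ n_0, with all values strictly positive except possibly ν'_{n_0}(0) which may vanish only in a limit; specifically ν^θ_{n_0} = θ ν_{n_0} + (1-θ)δ_1 for θ ∈ (0,1] and ν^θ_n = ν_n otherwise. Then for every probability measure ξ on F = ⊕_ℕ ℤ/2ℤ, h_ξ(S, ν) − h_ξ(S, ν^θ) = ξ({f ∈ F : f(n_0) ≠ 0}) · (Φ(ν_{n_0}(0)) − Φ(ν^θ_{n_0}(0))), where Φ(t) = (1−2t)·log((1−t)/t) for t ∈ (0,1). -/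
open MeasureTheory

namespace EntropyAux

lemma zmod2_cases (x : ZMod 2) : x = 0 ∨ x = 1 := by revert x; decide

lemma zmod2_ne_zero {x : ZMod 2} (h : x ≠ 0) : x = 1 := by revert h; revert x; decide

lemma zmod2_add_eq_iff (x c w : ZMod 2) : x + c = w ↔ x = w + c := by revert x c w; decide

/-- Cylinder sets in `ℕ → ZMod 2`. -/
def cyl (s : Finset ℕ) (v : ℕ → ZMod 2) : Set (ℕ → ZMod 2) := {y | ∀ n ∈ s, y n = v n}

lemma measurableSet_cyl (s : Finset ℕ) (v : ℕ → ZMod 2) : MeasurableSet (cyl s v) := by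
  have h : cyl s v = ⋂ n ∈ (s : Set ℕ), (fun y : ℕ → ZMod 2 => y n) ⁻¹' {v n} := by
    ext y; simp [cyl]
  rw [h]
  exact MeasurableSet.biInter (Finset.countable_toSet s)
    fun n _ => (measurable_pi_apply n) (measurableSet_singleton _)

/-- Two finite measures on `ℕ → ZMod 2` agreeing on all cylinders are equal. -/
lemma ext_of_cyl (μ μ' : Measure (ℕ → ZMod 2)) [IsFiniteMeasure μ]
    (h : ∀ s v, μ (cyl s v) = μ' (cyl s v)) : μ = μ' := by
  have hgen : (inferInstance : MeasurableSpace (ℕ → ZMod 2))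
      = MeasurableSpace.generateFrom {S | ∃ s v, S = cyl s v} := by
    apply le_antisymm
    · intro S hS
      have hc : ∀ n : ℕ,
          Measurable[MeasurableSpace.generateFrom {S | ∃ s v, S = cyl s v}]
            (fun y : ℕ → ZMod 2 => y n) := by
        intro n T _
        have hT : (fun y : ℕ → ZMod 2 => y n) ⁻¹' T
            = ⋃ c ∈ T, (fun y : ℕ → ZMod 2 => y n) ⁻¹' {c} := by
          rw [Set.biUnion_preimage_singleton]
        rw [hT]
        refine MeasurableSet.biUnion (Set.to_countable T) fun c _ => ?_
        refine MeasurableSpace.measurableSet_generateFrom ⟨{n}, fun _ => c, ?_⟩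
        ext y; simp [cyl]
      have hle : (MeasurableSpace.pi : MeasurableSpace (ℕ → ZMod 2))
          ≤ MeasurableSpace.generateFrom {S | ∃ s v, S = cyl s v} := by
        refine iSup_le fun n => ?_
        exact measurable_iff_comap_le.mp (hc n)
      exact hle S hS
    · rw [MeasurableSpace.generateFrom_le_iff]
      rintro S ⟨s, v, rfl⟩
      exact measurableSet_cyl s v
  have hpi : IsPiSystem {S : Set (ℕ → ZMod 2) | ∃ s v, S = cyl s v} := by
    rintro S ⟨s, v, rfl⟩ T ⟨s', v', rfl⟩ hne
    obtain ⟨y₀, hy₀, hy₀'⟩ := hne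
    refine ⟨s ∪ s', fun n => if n ∈ s then v n else v' n, ?_⟩
    ext y
    simp only [cyl, Set.mem_inter_iff, Set.mem_setOf_eq, Finset.mem_union]
    constructor
    · rintro ⟨h1, h2⟩ n hn
      by_cases hns : n ∈ s
      · simp [hns, h1 n hns]
      · rcases hn with hn | hn
        · exact absurd hn hns
        · simp [hns, h2 n hn]
    · intro hy
      constructor
      · intro n hn
        have := hy n (Or.inl hn)
        simpa [hn] using this
      · intro n hn
        have hthis := hy n (Or.inr hn)
        by_cases hns : n ∈ s
        · have e1 : y₀ n = v n := hy₀ n hns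
          have e2 : y₀ n = v' n := hy₀' n hn
          simp only [hns, if_true] at hthis
          rw [hthis, ← e1, e2]
        · simpa [hns] using hthis
  refine ext_of_generate_finite _ hgen hpi ?_ ?_
  · rintro S ⟨s, v, rfl⟩; exact h s v
  · have huniv : (Set.univ : Set (ℕ → ZMod 2)) = cyl ∅ (fun _ => 0) := by
      ext y; simp [cyl]
    rw [huniv]; exact h ∅ _

lemma coord_meas (n : ℕ) (c : ZMod 2) :
    MeasurableSet ((fun y : ℕ → ZMod 2 => y n) ⁻¹' {c}) :=
  (measurable_pi_apply n) (measurableSet_singleton c)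

lemma coord_repr (n : ℕ) (r : ZMod 2 → ℝ) :
    (fun y : ℕ → ZMod 2 => r (y n)) = fun y =>
      ((fun y : ℕ → ZMod 2 => y n) ⁻¹' {0}).indicator (fun _ => r 0) y
      + ((fun y : ℕ → ZMod 2 => y n) ⁻¹' {1}).indicator (fun _ => r 1) y := by
  funext y
  rcases zmod2_cases (y n) with h | h <;>
    simp [Set.indicator, h, (by decide : ¬ ((0 : ZMod 2) = 1)),
      (by decide : ¬ ((1 : ZMod 2) = 0))]

lemma integrable_coord (μ : Measure (ℕ → ZMod 2)) [IsFiniteMeasure μ]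
    (n : ℕ) (r : ZMod 2 → ℝ) : Integrable (fun y : ℕ → ZMod 2 => r (y n)) μ := by
  rw [coord_repr]
  exact ((integrable_const _).indicator (coord_meas n 0)).add
    ((integrable_const _).indicator (coord_meas n 1))

lemma integral_coord (p : ℕ → ZMod 2 → ℝ) (hp : ∀ n c, 0 ≤ p n c)
    (μ : Measure (ℕ → ZMod 2)) [IsProbabilityMeasure μ]
    (hμ : ∀ s v, μ (cyl s v) = ∏ n ∈ s, ENNReal.ofReal (p n (v n)))
    (n : ℕ) (r : ZMod 2 → ℝ) :
    ∫ y, r (y n) ∂μ = p n 0 * r 0 + p n 1 * r 1 := by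
  have hval : ∀ c : ZMod 2,
      μ ((fun y : ℕ → ZMod 2 => y n) ⁻¹' {c}) = ENNReal.ofReal (p n c) := by
    intro c
    have hs : (fun y : ℕ → ZMod 2 => y n) ⁻¹' {c} = cyl {n} (fun _ => c) := by
      ext y; simp [cyl]
    rw [hs, hμ, Finset.prod_singleton]
  rw [coord_repr,
    integral_add ((integrable_const _).indicator (coord_meas n 0))
      ((integrable_const _).indicator (coord_meas n 1)),
    integral_indicator_const _ (coord_meas n 0),
    integral_indicator_const _ (coord_meas n 1),
    measureReal_def, measureReal_def, hval 0, hval 1, ENNReal.toReal_ofReal (hp n 0), ENNReal.toReal_ofReal (hp n 1),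
    smul_eq_mul, smul_eq_mul]

/-- Core computation: the entropy integrand for a product-type measure. -/
lemma integral_log_rnDeriv
    (p : ℕ → ZMod 2 → ℝ) (hp : ∀ n c, 0 < p n c) (hps : ∀ n, p n 0 + p n 1 = 1)
    (μ : Measure (ℕ → ZMod 2)) [IsProbabilityMeasure μ]
    (hμ : ∀ (s : Finset ℕ) (v : ℕ → ZMod 2),
      μ (cyl s v) = ∏ n ∈ s, ENNReal.ofReal (p n (v n)))
    (f : ℕ →₀ ZMod 2) :
    ∫ y, Real.log ((μ.map (fun y n => y n + f n)).rnDeriv μ y).toReal ∂μ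
      = ∑ n ∈ f.support, (p n 0 - p n 1) * (Real.log (p n 1) - Real.log (p n 0)) := by
  classical
  set T : (ℕ → ZMod 2) → (ℕ → ZMod 2) := fun y n => y n + f n with hT_def
  have hT : Measurable T := measurable_pi_lambda _ fun n =>
    (Measurable.of_discrete (f := fun c : ZMod 2 => c + f n)).comp (measurable_pi_apply n)
  set G : (ℕ → ZMod 2) → ℝ := fun y => ∏ n ∈ f.support, p n (y n + f n) / p n (y n)
    with hG_def
  have hGpos : ∀ y, 0 < G y := fun y => Finset.prod_pos fun n _ => div_pos (hp _ _) (hp _ _)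
  have hGmeas : Measurable G := Finset.measurable_prod _ fun n _ =>
    (Measurable.of_discrete (f := fun c : ZMod 2 => p n (c + f n) / p n c)).comp
      (measurable_pi_apply n)
  have hgE : Measurable fun y => ENNReal.ofReal (G y) := ENNReal.measurable_ofReal.comp hGmeas
  have hmap : ∀ s v, (μ.map T) (cyl s v) = ∏ n ∈ s, ENNReal.ofReal (p n (v n + f n)) := by
    intro s v
    rw [Measure.map_apply hT (measurableSet_cyl s v)]
    have hpre : T ⁻¹' cyl s v = cyl s (fun n => v n + f n) := by
      ext y
      simp only [cyl, Set.mem_preimage, Set.mem_setOf_eq, hT_def]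
      exact forall₂_congr fun n _ => zmod2_add_eq_iff _ _ _
    rw [hpre, hμ]
  have base : ∀ (s : Finset ℕ) (v : ℕ → ZMod 2), f.support ⊆ s →
      ∫⁻ y in cyl s v, ENNReal.ofReal (G y) ∂μ
        = ∏ n ∈ s, ENNReal.ofReal (p n (v n + f n)) := by
    intro s v hsub
    have hc : ∀ᵐ y ∂μ, y ∈ cyl s v →
        ENNReal.ofReal (G y)
          = ENNReal.ofReal (∏ n ∈ f.support, p n (v n + f n) / p n (v n)) := by
      refine ae_of_all _ fun y hy => ?_
      congr 1
      exact Finset.prod_congr rfl fun n hn => by rw [hy n (hsub hn)]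
    rw [setLIntegral_congr_fun_ae (measurableSet_cyl s v) hc, setLIntegral_const, hμ,
      ← ENNReal.ofReal_prod_of_nonneg (fun n _ => (hp n _).le),
      ← ENNReal.ofReal_prod_of_nonneg (fun n _ => (hp n _).le),
      ← ENNReal.ofReal_mul (Finset.prod_nonneg fun n _ => (div_pos (hp _ _) (hp _ _)).le)]
    congr 1
    rw [← Finset.prod_sdiff hsub (f := fun n => p n (v n)),
      ← Finset.prod_sdiff hsub (f := fun n => p n (v n + f n))]
    have h2 : ∏ n ∈ s \ f.support, p n (v n + f n) = ∏ n ∈ s \ f.support, p n (v n) :=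
      Finset.prod_congr rfl fun n hn => by
        rw [Finsupp.notMem_support_iff.mp (Finset.mem_sdiff.mp hn).2, add_zero]
    rw [h2]
    have h3 : (∏ n ∈ f.support, p n (v n + f n) / p n (v n)) * ∏ n ∈ f.support, p n (v n)
        = ∏ n ∈ f.support, p n (v n + f n) := by
      rw [Finset.prod_div_distrib, div_mul_cancel₀]
      exact ne_of_gt (Finset.prod_pos fun n _ => hp n _)
    rw [← h3]; ring
  have key2 : ∀ (k : ℕ) (s : Finset ℕ) (v : ℕ → ZMod 2), (f.support \ s).card ≤ k →
      ∫⁻ y in cyl s v, ENNReal.ofReal (G y) ∂μ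
        = ∏ n ∈ s, ENNReal.ofReal (p n (v n + f n)) := by
    intro k
    induction k with
    | zero =>
      intro s v hcard
      refine base s v ?_
      rw [← Finset.sdiff_eq_empty_iff_subset]
      exact Finset.card_eq_zero.mp (Nat.le_zero.mp hcard)
    | succ k ih =>
      intro s v hcard
      by_cases hsub : f.support ⊆ s
      · exact base s v hsub
      · obtain ⟨m, hm⟩ := Finset.sdiff_nonempty.mpr hsub
        have hmf : m ∈ f.support := (Finset.mem_sdiff.mp hm).1
        have hms : m ∉ s := (Finset.mem_sdiff.mp hm).2
        have hsplit : cyl s v = cyl (insert m s) (Function.update v m 0)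
            ∪ cyl (insert m s) (Function.update v m 1) := by
          ext y
          simp only [cyl, Set.mem_setOf_eq, Set.mem_union, Finset.mem_insert]
          constructor
          · intro h
            rcases zmod2_cases (y m) with hc | hc
            · left; rintro n (rfl | hn)
              · rw [Function.update_self]; exact hc
              · rw [Function.update_of_ne (show _ ≠ m from fun he => hms (he ▸ hn))]; exact h n hn
            · right; rintro n (rfl | hn)
              · rw [Function.update_self]; exact hc
              · rw [Function.update_of_ne (show _ ≠ m from fun he => hms (he ▸ hn))]; exact h n hn
          · rintro (h | h) n hn
            · have := h n (Or.inr hn)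
              rwa [Function.update_of_ne (show _ ≠ m from fun he => hms (he ▸ hn))] at this
            · have := h n (Or.inr hn)
              rwa [Function.update_of_ne (show _ ≠ m from fun he => hms (he ▸ hn))] at this
        have hdisj : Disjoint (cyl (insert m s) (Function.update v m 0))
            (cyl (insert m s) (Function.update v m 1)) := by
          rw [Set.disjoint_left]
          intro y h0 h1
          have e0 := h0 m (Finset.mem_insert_self m s)
          have e1 := h1 m (Finset.mem_insert_self m s)
          rw [Function.update_self] at e0 e1
          exact absurd (e0 ▸ e1) (by rw [e0] at e1; exact fun _ => (by decide : ¬ ((0:ZMod 2) = 1)) e1)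
        have hcards : (f.support \ insert m s).card ≤ k := by
          rw [Finset.sdiff_insert]
          have := Finset.card_erase_lt_of_mem hm
          omega
        rw [hsplit, lintegral_union (measurableSet_cyl _ _) hdisj,
          ih _ _ hcards, ih _ _ hcards, Finset.prod_insert hms, Finset.prod_insert hms]
        have hup : ∀ c : ZMod 2,
            ∏ n ∈ s, ENNReal.ofReal (p n (Function.update v m c n + f n))
              = ∏ n ∈ s, ENNReal.ofReal (p n (v n + f n)) := fun c =>
          Finset.prod_congr rfl fun n hn => by
            rw [Function.update_of_ne (show _ ≠ m from fun he => hms (he ▸ hn))]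
        rw [hup 0, hup 1, Function.update_self, Function.update_self, ← add_mul,
          ← ENNReal.ofReal_add (hp m _).le (hp m _).le]
        have hone : p m (0 + f m) + p m (1 + f m) = 1 := by
          rcases zmod2_cases (f m) with hc | hc
          · rw [hc, add_zero, add_zero]; exact hps m
          · rw [hc, (by decide : (0 : ZMod 2) + 1 = 1), (by decide : (1 : ZMod 2) + 1 = 0),
              add_comm]
            exact hps m
        rw [hone, ENNReal.ofReal_one, one_mul]
  have hwd : IsProbabilityMeasure (μ.withDensity fun y => ENNReal.ofReal (G y)) := by
    constructor
    have huniv : (Set.univ : Set (ℕ → ZMod 2)) = cyl ∅ (fun _ => 0) := by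
      ext y; simp [cyl]
    rw [huniv, withDensity_apply _ (measurableSet_cyl _ _)]
    simpa using key2 (f.support \ ∅).card ∅ (fun _ => 0) le_rfl
  have hmeq : μ.map T = μ.withDensity fun y => ENNReal.ofReal (G y) := by
    haveI : IsProbabilityMeasure (μ.map T) := Measure.isProbabilityMeasure_map hT.aemeasurable
    refine ext_of_cyl _ _ fun s v => ?_
    rw [hmap s v, withDensity_apply _ (measurableSet_cyl s v),
      key2 (f.support \ s).card s v le_rfl]
  have hrn : (μ.map T).rnDeriv μ =ᵐ[μ] fun y => ENNReal.ofReal (G y) := by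
    rw [hmeq]; exact Measure.rnDeriv_withDensity μ hgE
  have hlog : (fun y => Real.log ((μ.map T).rnDeriv μ y).toReal)
      =ᵐ[μ] fun y => Real.log (G y) := by
    filter_upwards [hrn] with y hy
    rw [hy, ENNReal.toReal_ofReal (hGpos y).le]
  rw [integral_congr_ae hlog]
  have hlogG : ∀ y : ℕ → ZMod 2, Real.log (G y)
      = ∑ n ∈ f.support, (Real.log (p n (y n + f n)) - Real.log (p n (y n))) := by
    intro y
    rw [hG_def]
    rw [Real.log_prod fun n _ => ne_of_gt (div_pos (hp _ _) (hp _ _))]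
    exact Finset.sum_congr rfl fun n _ =>
      Real.log_div (ne_of_gt (hp _ _)) (ne_of_gt (hp _ _))
  rw [integral_congr_ae (ae_of_all _ hlogG),
    integral_finset_sum _ (fun n _ => integrable_coord μ n
      (fun c => Real.log (p n (c + f n)) - Real.log (p n c)))]
  refine Finset.sum_congr rfl fun n hn => ?_
  rw [integral_coord p (fun n c => (hp n c).le) μ hμ n
    (fun c => Real.log (p n (c + f n)) - Real.log (p n c))]
  have hfn : f n = 1 := zmod2_ne_zero (Finsupp.mem_support_iff.mp hn)
  rw [hfn, (by decide : (0 : ZMod 2) + 1 = 1), (by decide : (1 : ZMod 2) + 1 = 0)]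
  ring

/-- Specialization to marginals `(b n, 1 - b n)`. -/
lemma integral_log_rnDeriv' (b : ℕ → ℝ) (hb0 : ∀ n, 0 < b n) (hb1 : ∀ n, b n < 1)
    (μ : Measure (ℕ → ZMod 2)) [IsProbabilityMeasure μ]
    (hμ : ∀ (s : Finset ℕ) (v : ℕ → ZMod 2),
      μ (cyl s v) = ∏ n ∈ s, ENNReal.ofReal (if v n = 0 then b n else 1 - b n))
    (f : ℕ →₀ ZMod 2) :
    ∫ y, Real.log ((μ.map (fun y n => y n + f n)).rnDeriv μ y).toReal ∂μ
      = ∑ n ∈ f.support, (2 * b n - 1) * Real.log ((1 - b n) / b n) := by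
  have hp : ∀ n (c : ZMod 2), 0 < (if c = 0 then b n else 1 - b n) := by
    intro n c
    rcases zmod2_cases c with h | h <;>
      simp [h, (by decide : ¬ ((1 : ZMod 2) = 0)), hb0 n, sub_pos.mpr (hb1 n)]
  have hps : ∀ n, (if (0 : ZMod 2) = 0 then b n else 1 - b n)
      + (if (1 : ZMod 2) = 0 then b n else 1 - b n) = 1 := by
    intro n
    rw [if_pos rfl, if_neg (by decide : ¬ ((1 : ZMod 2) = 0))]
    ring
  have h := integral_log_rnDeriv (fun n c => if c = 0 then b n else 1 - b n) hp hps μ hμ f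
  rw [h]
  refine Finset.sum_congr rfl fun n hn => ?_
  rw [if_pos rfl, if_neg (by decide : ¬ ((1 : ZMod 2) = 0)),
    Real.log_div (ne_of_gt (sub_pos.mpr (hb1 n))) (ne_of_gt (hb0 n))]
  ring

end EntropyAux

/-- Modifying one coordinate marginal `ν_{n₀}` into
`ν^θ_{n₀} = θ ν_{n₀} + (1-θ) δ₁` changes the entropy of the translation action of
`F = ⊕_ℕ ℤ/2ℤ` by `ξ({f : f(n₀) ≠ 0}) · (Φ(ν_{n₀}(0)) − Φ(ν^θ_{n₀}(0)))`, where
`Φ(t) = (1−2t) log((1−t)/t)`. Here `a n = ν_n(0)` and `ν^θ_{n₀}(0) = θ · a n₀`. -/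
theorem entropy_difference_of_modified_marginal
    (a : ℕ → ℝ) (ha0 : ∀ n, 0 < a n) (ha1 : ∀ n, a n < 1)
    (n₀ : ℕ) (θ : ℝ) (hθ0 : 0 < θ) (hθ1 : θ ≤ 1)
    (ν νθ : Measure (ℕ → ZMod 2)) [IsProbabilityMeasure ν] [IsProbabilityMeasure νθ]
    -- ν = ⊗ ν_n with ν_n({0}) = a n, ν_n({1}) = 1 - a n
    (hν : ∀ (s : Finset ℕ) (v : ℕ → ZMod 2),
      ν {y | ∀ n ∈ s, y n = v n}
        = ∏ n ∈ s, ENNReal.ofReal (if v n = 0 then a n else 1 - a n))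
    -- νθ = ⊗ ν^θ_n with ν^θ_n = ν_n for n ≠ n₀ and ν^θ_{n₀} = θ ν_{n₀} + (1-θ) δ₁
    (hνθ : ∀ (s : Finset ℕ) (v : ℕ → ZMod 2),
      νθ {y | ∀ n ∈ s, y n = v n}
        = ∏ n ∈ s, ENNReal.ofReal
            (if n = n₀ then (if v n = 0 then θ * a n else 1 - θ * a n)
             else (if v n = 0 then a n else 1 - a n)))
    (ξ : (ℕ →₀ ZMod 2) → ℝ) (hξ : ∀ f, 0 ≤ ξ f) (hξ1 : ∑' f, ξ f = 1)
    -- the entropies are well defined (summability of the defining series)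
    (hsum : Summable (fun f : ℕ →₀ ZMod 2 => ξ f *
      ∫ y, Real.log ((ν.map (fun y n => y n + f n)).rnDeriv ν y).toReal ∂ν))
    (hsumθ : Summable (fun f : ℕ →₀ ZMod 2 => ξ f *
      ∫ y, Real.log ((νθ.map (fun y n => y n + f n)).rnDeriv νθ y).toReal ∂νθ)) :
    (-∑' f : ℕ →₀ ZMod 2, ξ f *
        ∫ y, Real.log ((ν.map (fun y n => y n + f n)).rnDeriv ν y).toReal ∂ν)
      - (-∑' f : ℕ →₀ ZMod 2, ξ f *
        ∫ y, Real.log ((νθ.map (fun y n => y n + f n)).rnDeriv νθ y).toReal ∂νθ)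
      = (∑' f : ℕ →₀ ZMod 2, if f n₀ ≠ 0 then ξ f else 0) *
          ((1 - 2 * a n₀) * Real.log ((1 - a n₀) / a n₀)
            - (1 - 2 * (θ * a n₀)) * Real.log ((1 - θ * a n₀) / (θ * a n₀))) := by
  classical
  set b' : ℕ → ℝ := fun n => if n = n₀ then θ * a n else a n with hb'def
  have hb'0 : ∀ n, 0 < b' n := by
    intro n; by_cases h : n = n₀
    · simp only [hb'def]; rw [if_pos h]; exact mul_pos hθ0 (ha0 n)
    · simp [hb'def, h, ha0 n]
  have hb'1 : ∀ n, b' n < 1 := by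
    intro n; by_cases h : n = n₀
    · simp only [hb'def]; rw [if_pos h]
      calc θ * a n ≤ 1 * a n := mul_le_mul_of_nonneg_right hθ1 (ha0 n).le
        _ = a n := one_mul _
        _ < 1 := ha1 n
    · simp [hb'def, h, ha1 n]
  have hν' : ∀ (s : Finset ℕ) (v : ℕ → ZMod 2), ν (EntropyAux.cyl s v)
      = ∏ n ∈ s, ENNReal.ofReal (if v n = 0 then a n else 1 - a n) := by
    intro s v; simp only [EntropyAux.cyl]; exact hν s v
  have hνθ' : ∀ (s : Finset ℕ) (v : ℕ → ZMod 2), νθ (EntropyAux.cyl s v)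
      = ∏ n ∈ s, ENNReal.ofReal (if v n = 0 then b' n else 1 - b' n) := by
    intro s v
    simp only [EntropyAux.cyl]
    rw [hνθ s v]
    refine Finset.prod_congr rfl fun n _ => ?_
    by_cases h1 : n = n₀ <;> by_cases h2 : v n = 0 <;> simp [hb'def, h1, h2]
  have e1 : ∀ f : ℕ →₀ ZMod 2,
      ∫ y, Real.log ((ν.map (fun y n => y n + f n)).rnDeriv ν y).toReal ∂ν
        = ∑ n ∈ f.support, (2 * a n - 1) * Real.log ((1 - a n) / a n) :=
    fun f => EntropyAux.integral_log_rnDeriv' a ha0 ha1 ν hν' f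
  have e2 : ∀ f : ℕ →₀ ZMod 2,
      ∫ y, Real.log ((νθ.map (fun y n => y n + f n)).rnDeriv νθ y).toReal ∂νθ
        = ∑ n ∈ f.support, (2 * b' n - 1) * Real.log ((1 - b' n) / b' n) :=
    fun f => EntropyAux.integral_log_rnDeriv' b' hb'0 hb'1 νθ hνθ' f
  have hs1 : Summable (fun f : ℕ →₀ ZMod 2 =>
      ξ f * ∑ n ∈ f.support, (2 * a n - 1) * Real.log ((1 - a n) / a n)) := by
    have := hsum; simp only [e1] at this; exact this
  have hs2 : Summable (fun f : ℕ →₀ ZMod 2 =>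
      ξ f * ∑ n ∈ f.support, (2 * b' n - 1) * Real.log ((1 - b' n) / b' n)) := by
    have := hsumθ; simp only [e2] at this; exact this
  simp only [e1, e2]
  rw [neg_sub_neg, ← Summable.tsum_sub hs2 hs1]
  have hterm : ∀ f : ℕ →₀ ZMod 2,
      ξ f * (∑ n ∈ f.support, (2 * b' n - 1) * Real.log ((1 - b' n) / b' n))
        - ξ f * (∑ n ∈ f.support, (2 * a n - 1) * Real.log ((1 - a n) / a n))
      = (if f n₀ ≠ 0 then ξ f else 0) *
          ((1 - 2 * a n₀) * Real.log ((1 - a n₀) / a n₀)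
            - (1 - 2 * (θ * a n₀)) * Real.log ((1 - θ * a n₀) / (θ * a n₀))) := by
    intro f
    rw [← mul_sub, ← Finset.sum_sub_distrib]
    have hsum_eq : ∑ n ∈ f.support,
        ((2 * b' n - 1) * Real.log ((1 - b' n) / b' n)
          - (2 * a n - 1) * Real.log ((1 - a n) / a n))
        = ∑ n ∈ f.support, (if n = n₀ then
            ((1 - 2 * a n₀) * Real.log ((1 - a n₀) / a n₀)
              - (1 - 2 * (θ * a n₀)) * Real.log ((1 - θ * a n₀) / (θ * a n₀))) else 0) := by
      refine Finset.sum_congr rfl fun n _ => ?_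
      by_cases h : n = n₀
      · rw [if_pos h, h]; simp only [hb'def, if_pos rfl]; ring
      · simp [hb'def, h]
    rw [hsum_eq, Finset.sum_ite_eq' f.support n₀ _]
    by_cases h : f n₀ ≠ 0
    · simp [Finsupp.mem_support_iff, h]
    · simp only [ne_eq, not_not] at h
      simp [Finsupp.mem_support_iff, h]
  rw [tsum_congr hterm, tsum_mul_right]
end
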